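/- Craig's formula: for every x ≥ 0, erfc(x) = (2/π) · ∫₀^{π/2} exp(−x² / sin²θ) dθ. -/

import Mathlib

open Real

/-- The Gauss error function `erf x = (2/√π) ∫₀ˣ e^{−t²} dt`. -/
noncomputable def erf (x : ℝ) : ℝ := 2 / Real.sqrt Real.pi * ∫ t in (0:ℝ)..x, Real.exp (-t ^ 2)

/-- The complementary error function `erfc x = 1 - erf x`. -/
noncomputable def erfc (x : ℝ) : ℝ := 1 - erf x

open MeasureTheory Set Filter intervalIntegral

lemma craig_subst (x : ℝ) (hx : 0 < x) :
    ∫ θ in Ioo 0 (π/2), (x / Real.sin θ^2) * Real.exp (-x^2 / Real.sin θ^2)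
      = Real.sqrt π / 2 * Real.exp (-x^2) := by
  set f : ℝ → ℝ := fun θ => x * Real.tan (π/2 - θ) with hf
  set f' : ℝ → ℝ := fun θ => -(x / Real.sin θ^2) with hf'
  have hsin : ∀ θ ∈ Ioo (0:ℝ) (π/2), 0 < Real.sin θ := fun θ hθ =>
    Real.sin_pos_of_pos_of_lt_pi hθ.1 (hθ.2.trans (by linarith [Real.pi_pos]))
  have hderiv : ∀ θ ∈ Ioo (0:ℝ) (π/2), HasDerivWithinAt f (f' θ) (Ioo 0 (π/2)) θ := by
    intro θ hθ
    have hc : Real.cos (π/2 - θ) ≠ 0 := by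
      rw [Real.cos_pi_div_two_sub]; exact (hsin θ hθ).ne'
    have h1 : HasDerivAt (fun y : ℝ => π/2 - y) (-1) θ := (hasDerivAt_id θ).const_sub (π/2)
    have h2 := (Real.hasDerivAt_tan hc).comp θ h1
    have h3 := h2.const_mul x
    convert h3.hasDerivWithinAt using 1
    case e'_4 => rfl
    case e'_5 => rfl
    case e'_8 => rfl
    rw [hf', Real.cos_pi_div_two_sub]
    field_simp
  have hinj : InjOn f (Ioo 0 (π/2)) := by
    intro a ha b hb hab
    have h1 : Real.tan (π/2 - a) = Real.tan (π/2 - b) := mul_left_cancel₀ hx.ne' hab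
    have := Real.injOn_tan
      (by constructor <;> [linarith [ha.2, Real.pi_pos]; linarith [ha.1]])
      (by constructor <;> [linarith [hb.2, Real.pi_pos]; linarith [hb.1]]) h1
    linarith
  have himg : f '' Ioo 0 (π/2) = Ioi 0 := by
    ext t
    constructor
    · rintro ⟨θ, hθ, rfl⟩
      exact mul_pos hx (Real.tan_pos_of_pos_of_lt_pi_div_two (by linarith [hθ.2]) (by linarith [hθ.1]))
    · intro ht
      refine ⟨π/2 - Real.arctan (t/x), ⟨?_, ?_⟩, ?_⟩
      · linarith [Real.arctan_lt_pi_div_two (t/x)]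
      · have : 0 < Real.arctan (t/x) := by
          rw [← Real.arctan_zero]; exact Real.arctan_strictMono (div_pos ht hx)
        linarith
      · simp only [hf, sub_sub_cancel, Real.tan_arctan]
        field_simp
  have key := integral_image_eq_integral_abs_deriv_smul measurableSet_Ioo hderiv hinj
    (fun t => Real.exp (-x^2 - t^2))
  rw [himg] at key
  have lhs_eq : ∫ t in Ioi (0:ℝ), Real.exp (-x^2 - t^2) = Real.exp (-x^2) * (Real.sqrt π / 2) := by
    have : ∀ t : ℝ, Real.exp (-x^2 - t^2) = Real.exp (-x^2) * Real.exp (-(1:ℝ)*t^2) := by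
      intro t; rw [← Real.exp_add]; ring_nf
    simp_rw [this]
    rw [MeasureTheory.integral_const_mul, integral_gaussian_Ioi 1]
    norm_num
  rw [lhs_eq] at key
  have rhs_eq : ∀ θ ∈ Ioo (0:ℝ) (π/2),
      |f' θ| • Real.exp (-x^2 - (f θ)^2) = (x / Real.sin θ^2) * Real.exp (-x^2 / Real.sin θ^2) := by
    intro θ hθ
    have hs := hsin θ hθ
    have hc : Real.cos (π/2 - θ) ≠ 0 := by rw [Real.cos_pi_div_two_sub]; exact hs.ne'
    have habs : |f' θ| = x / Real.sin θ^2 := by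
      rw [hf', abs_neg, abs_of_pos (by positivity)]
    have harg : -x^2 - (f θ)^2 = -x^2 / Real.sin θ^2 := by
      have h1 : ((1:ℝ) + Real.tan (π/2 - θ)^2)⁻¹ = Real.cos (π/2-θ)^2 := Real.inv_one_add_tan_sq hc
      rw [Real.cos_pi_div_two_sub] at h1
      have hs2 : Real.sin θ ^ 2 ≠ 0 := by positivity
      rw [hf]
      field_simp at h1 ⊢
      nlinarith [h1]
    rw [habs, harg, smul_eq_mul]
  rw [MeasureTheory.setIntegral_congr_fun measurableSet_Ioo rhs_eq] at key
  rw [← key]; ring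

lemma sin_pos_of_uIoc {θ : ℝ} (hθ : θ ∈ Set.uIoc 0 (π/2)) : 0 < Real.sin θ := by
  rw [Set.uIoc_of_le (by positivity : (0:ℝ) ≤ π/2)] at hθ
  exact Real.sin_pos_of_pos_of_lt_pi hθ.1 (hθ.2.trans_lt (by linarith [Real.pi_pos]))

lemma craig_meas (x : ℝ) (s : Set ℝ) :
    AEStronglyMeasurable (fun θ : ℝ => Real.exp (-x^2 / Real.sin θ^2)) (volume.restrict s) := by
  apply Measurable.aestronglyMeasurable; fun_prop

lemma craig_int (x : ℝ) :
    IntervalIntegrable (fun θ : ℝ => Real.exp (-x^2 / Real.sin θ^2)) volume 0 (π/2) := by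
  apply (_root_.intervalIntegrable_const (c := (1:ℝ))).mono_fun (craig_meas x _)
  filter_upwards with θ
  simp only [Real.norm_eq_abs, Real.abs_exp, norm_one, abs_one]
  exact Real.exp_le_one_iff.mpr (div_nonpos_of_nonpos_of_nonneg
    (neg_nonpos.mpr (by positivity)) (by positivity))

lemma craig_G_deriv (x : ℝ) (hx : 0 < x) :
    HasDerivAt (fun y : ℝ => ∫ θ in (0:ℝ)..(π/2), Real.exp (-y^2 / Real.sin θ^2))
      (-Real.sqrt π * Real.exp (-x^2)) x := by
  have hderiv := intervalIntegral.hasDerivAt_integral_of_dominated_loc_of_deriv_le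
    (F := fun (y : ℝ) (θ : ℝ) => Real.exp (-y^2 / Real.sin θ^2))
    (F' := fun (y : ℝ) (θ : ℝ) => Real.exp (-y^2 / Real.sin θ^2) * (-(2*y) / Real.sin θ^2))
    (x₀ := x) (a := 0) (b := π/2) (bound := fun _ => 12 / x) (μ := volume)
    (Metric.ball_mem_nhds x (half_pos hx))
    (Eventually.of_forall fun y => craig_meas y _)
    (craig_int x)
    (by apply Measurable.aestronglyMeasurable; fun_prop)
    ?_ (_root_.intervalIntegrable_const) ?_
  · have heval : (∫ θ in (0:ℝ)..(π/2),
        Real.exp (-x^2 / Real.sin θ^2) * (-(2*x) / Real.sin θ^2)) = -Real.sqrt π * Real.exp (-x^2) := by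
      rw [intervalIntegral.integral_of_le (by positivity : (0:ℝ) ≤ π/2),
        MeasureTheory.integral_Ioc_eq_integral_Ioo]
      have congr_eq : ∀ θ ∈ Ioo (0:ℝ) (π/2),
          Real.exp (-x^2 / Real.sin θ^2) * (-(2*x) / Real.sin θ^2)
            = (-2) * ((x / Real.sin θ^2) * Real.exp (-x^2 / Real.sin θ^2)) := by
        intro θ hθ; ring
      rw [MeasureTheory.setIntegral_congr_fun measurableSet_Ioo congr_eq,
        MeasureTheory.integral_const_mul, craig_subst x hx]
      ring
    rw [heval] at hderiv
    exact hderiv.2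
  · -- bound
    filter_upwards with θ hθ y hy
    have hs : 0 < Real.sin θ := sin_pos_of_uIoc hθ
    have hs2 : 0 < Real.sin θ ^ 2 := by positivity
    rw [Metric.mem_ball, Real.dist_eq, abs_lt] at hy
    have hy1 : x/2 < y := by linarith [hy.1]
    have hy2 : y < 3*x/2 := by linarith [hy.2]
    have hy0 : 0 < y := lt_trans (by positivity) hy1
    rw [Real.norm_eq_abs, abs_mul, Real.abs_exp]
    have habs : |(-(2*y) / Real.sin θ^2)| = 2*y / Real.sin θ^2 := by
      rw [abs_div, abs_neg, abs_of_pos (by positivity), abs_of_pos hs2]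
    rw [habs]
    set s := Real.sin θ ^ 2
    set z := (x^2/4)/s with hz
    have hz0 : 0 < z := by positivity
    have hze : z * Real.exp (-z) ≤ 1 := by
      have h1 : z ≤ Real.exp z := by linarith [Real.add_one_le_exp z]
      calc z * Real.exp (-z) ≤ Real.exp z * Real.exp (-z) :=
            mul_le_mul_of_nonneg_right h1 (Real.exp_pos _).le
        _ = 1 := by rw [← Real.exp_add]; simp
    have e1 : Real.exp (-y^2 / s) ≤ Real.exp (-z) := by
      apply Real.exp_le_exp.mpr
      rw [hz, ← neg_div, div_le_div_iff_of_pos_right hs2]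
      nlinarith
    have e2 : 2*y/s ≤ 12/x * z := by
      have h6 : 12/x * z = 3*x/s := by rw [hz]; field_simp; ring
      rw [h6, div_le_div_iff_of_pos_right hs2]
      linarith
    calc Real.exp (-y^2/s) * (2*y/s) ≤ Real.exp (-z) * (12/x * z) := by
          apply mul_le_mul e1 e2 (by positivity) (Real.exp_pos _).le
      _ = 12/x * (z * Real.exp (-z)) := by ring
      _ ≤ 12/x * 1 := by
          apply mul_le_mul_of_nonneg_left hze (by positivity)
      _ = 12/x := mul_one _
  · -- differentiability
    filter_upwards with θ hθ y hy
    have hs : 0 < Real.sin θ := sin_pos_of_uIoc hθ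
    have h0 : HasDerivAt (fun y : ℝ => -y^2 / Real.sin θ^2) (-(2*y) / Real.sin θ^2) y := by
      have := ((hasDerivAt_pow 2 y).neg).div_const (Real.sin θ^2)
      simpa using this
    exact h0.exp

lemma craig_G_cont : Continuous fun y : ℝ => ∫ θ in (0:ℝ)..(π/2), Real.exp (-y^2 / Real.sin θ^2) := by
  apply intervalIntegral.continuous_of_dominated_interval (bound := fun _ => (1:ℝ))
    (fun y => craig_meas y _) ?_ (_root_.intervalIntegrable_const) ?_
  · intro y
    filter_upwards with θ hθ
    simp only [Real.norm_eq_abs, Real.abs_exp]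
    exact Real.exp_le_one_iff.mpr (div_nonpos_of_nonpos_of_nonneg
      (neg_nonpos.mpr (by positivity)) (by positivity))
  · filter_upwards with θ hθ
    fun_prop

lemma erfc_hasDeriv (x : ℝ) :
    HasDerivAt erfc (-(2 / Real.sqrt π * Real.exp (-x^2))) x := by
  have hc : Continuous fun t : ℝ => Real.exp (-t^2) := by fun_prop
  have h1 : HasDerivAt (fun u : ℝ => ∫ t in (0:ℝ)..u, Real.exp (-t^2)) (Real.exp (-x^2)) x :=
    intervalIntegral.integral_hasDerivAt_right (hc.intervalIntegrable 0 x)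
      (hc.stronglyMeasurable.stronglyMeasurableAtFilter) hc.continuousAt
  have h2 := (h1.const_mul (2 / Real.sqrt π)).const_sub 1
  have heq : erfc = fun y : ℝ => 1 - 2 / Real.sqrt π * ∫ t in (0:ℝ)..y, Real.exp (-t^2) := by
    funext y; simp [erfc, erf]
  rw [heq]
  exact h2

theorem craig_formula (x : ℝ) (hx : 0 ≤ x) :
    erfc x = 2 / Real.pi *
      ∫ θ in (0:ℝ)..(Real.pi / 2), Real.exp (-x ^ 2 / Real.sin θ ^ 2) := by
  set Φ : ℝ → ℝ := fun y =>
    erfc y - 2 / π * ∫ θ in (0:ℝ)..(π/2), Real.exp (-y^2 / Real.sin θ^2) with hΦ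
  have hdiff : Differentiable ℝ erfc := fun y => (erfc_hasDeriv y).differentiableAt
  have herfc : Continuous erfc := hdiff.continuous
  have hΦcont : Continuous Φ := herfc.sub (continuous_const.mul craig_G_cont)
  have hΦ0 : Φ 0 = 0 := by
    have hone : ∀ θ : ℝ, Real.exp (-(0:ℝ)^2 / Real.sin θ^2) = 1 := by
      intro θ; norm_num
    have hint : (∫ θ in (0:ℝ)..(π/2), Real.exp (-(0:ℝ)^2 / Real.sin θ^2)) = π/2 := by
      simp_rw [hone]; simp
    simp only [hΦ, hint, erfc, erf]
    rw [intervalIntegral.integral_same]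
    have : π ≠ 0 := Real.pi_ne_zero
    field_simp
    ring
  have hΦd : ∀ y : ℝ, 0 < y → HasDerivAt Φ 0 y := by
    intro y hy
    have h1 := (erfc_hasDeriv y).sub ((craig_G_deriv y hy).const_mul (2/π))
    convert h1 using 1
    case e'_4 => rfl
    case e'_5 => rfl
    case e'_8 => rfl
    have h2 : Real.sqrt π * Real.sqrt π = π := Real.mul_self_sqrt Real.pi_pos.le
    have h3 : Real.sqrt π ≠ 0 := by positivity
    have h4 : π ≠ 0 := Real.pi_ne_zero
    rw [eq_comm]
    field_simp
    linear_combination (2 * Real.exp (-y^2)) * h2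
  rcases hx.eq_or_lt with h | h
  · rw [← h]
    have := hΦ0
    simp only [hΦ] at this
    linarith
  · have key : ∀ a ∈ Ioc (0:ℝ) x, Φ x = Φ a := by
      intro a ha
      have hconst := constant_of_has_deriv_right_zero (f := Φ) (a := a) (b := x)
        hΦcont.continuousOn
        (fun y hy => (hΦd y (lt_of_lt_of_le ha.1 hy.1)).hasDerivWithinAt)
      exact hconst x (right_mem_Icc.mpr ha.2)
    have t1 : Filter.Tendsto Φ (nhdsWithin 0 (Ioi 0)) (nhds (Φ 0)) :=
      (hΦcont.continuousAt).continuousWithinAt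
    have t2 : Filter.Tendsto Φ (nhdsWithin 0 (Ioi 0)) (nhds (Φ x)) := by
      refine Filter.Tendsto.congr' ?_ tendsto_const_nhds
      filter_upwards [Ioc_mem_nhdsGT h] with a ha
      exact key a ha
    have hfin : Φ x = Φ 0 := tendsto_nhds_unique t2 t1
    rw [hΦ0] at hfin
    simp only [hΦ] at hfin
    linarith
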